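/- Let (S_j)_{j=0}^{N-1} be a representation of the Cuntz algebra 𝒪_N on H, let f ∈ H with ‖f‖ = 1, and let μ_f be a spectral measure of f on [0,1). Then the sequence of measures μ_f^{(k)} converges weakly to μ_f: for every continuous function ψ : [0,1] → ℂ, lim_{k→∞} ∫ ψ dμ_f^{(k)} = ∫ ψ dμ_f. -/

import Mathlib

open MeasureTheory ContinuousLinearMap
open scoped InnerProductSpace

variable {H : Type*} [NormedAddCommGroup H] [InnerProductSpace ℂ H] [CompleteSpace H]

/-- The word operator `S_α = S_{α 1} ⋯ S_{α k}` associated to a multi-index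
`α ∈ {0,…,N-1}^k`. -/
noncomputable def Sw {N : ℕ} (S : Fin N → H →L[ℂ] H) {k : ℕ} (α : Fin k → Fin N) :
    H →L[ℂ] H :=
  (List.ofFn fun i => S (α i)).prod

/-- A family `S_0, …, S_{N-1}` of bounded operators is a representation of the Cuntz
algebra `𝒪_N` if `S_j^* S_k = δ_{jk} I` and `∑ j, S_j S_j^* = I`. -/
def CuntzRep {N : ℕ} (S : Fin N → H →L[ℂ] H) : Prop :=
  (∀ j k : Fin N, adjoint (S j) ∘L S k = if j = k then 1 else 0) ∧
    ∑ j : Fin N, S j ∘L adjoint (S j) = 1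

/-- `x_k(α) = α_1/N + α_2/N² + ⋯ + α_k/N^k`. -/
noncomputable def xk (N : ℕ) {k : ℕ} (α : Fin k → Fin N) : ℝ :=
  ∑ i : Fin k, (α i : ℝ) / (N : ℝ) ^ ((i : ℕ) + 1)

/-- The `N`-adic interval `I_k(α) = [x_k(α), x_k(α) + N^{-k})`. -/
noncomputable def Ik (N : ℕ) {k : ℕ} (α : Fin k → Fin N) : Set ℝ :=
  Set.Ico (xk N α) (xk N α + ((N : ℝ) ^ k)⁻¹)

/-- A Borel measure `μ` on `[0,1)` is a spectral measure of `g` if `μ([0,1)) = ‖g‖²`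
and `μ(I_k(α)) = ‖S_α^* g‖²` for every `k ≥ 1` and multi-index `α`. -/
def IsSpectralMeasureR {N : ℕ} (S : Fin N → H →L[ℂ] H) (g : H) (μ : Measure ℝ) : Prop :=
  μ (Set.Ico (0:ℝ) 1)ᶜ = 0 ∧ μ Set.univ = ENNReal.ofReal (‖g‖ ^ 2) ∧
    ∀ k : ℕ, 1 ≤ k → ∀ α : Fin k → Fin N,
      μ (Ik N α) = ENNReal.ofReal (‖adjoint (Sw S α) g‖ ^ 2)

/-- The atomic measure `μ_f^{(k)} = ∑_α ‖S_α^* f‖² δ_{x_k(α)}`. -/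
noncomputable def muk {N : ℕ} (S : Fin N → H →L[ℂ] H) (f : H) (k : ℕ) : Measure ℝ :=
  ∑ α : Fin k → Fin N,
    ENNReal.ofReal (‖adjoint (Sw S α) f‖ ^ 2) • Measure.dirac (xk N α)

/-! ### Auxiliary lemmas -/

lemma xk_mul_pow {N k : ℕ} (hN : 0 < N) (α : Fin k → Fin N) :
    xk N α * (N : ℝ) ^ k = ((finFunctionFinEquiv (fun i => α (Fin.rev i)) : ℕ) : ℝ) := by
  have hN0 : (N : ℝ) ≠ 0 := by positivity
  rw [finFunctionFinEquiv_apply]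
  push_cast
  rw [← Equiv.sum_comp Fin.revPerm
    (fun j : Fin k => (α (Fin.rev j) : ℝ) * (N : ℝ) ^ (j : ℕ))]
  simp only [Fin.revPerm_apply, Fin.rev_rev]
  rw [xk, Finset.sum_mul]
  refine Finset.sum_congr rfl fun j _ => ?_
  have h2 : (N : ℝ) ^ ((Fin.rev j : ℕ)) * (N : ℝ) ^ ((j : ℕ) + 1) = (N : ℝ) ^ k := by
    rw [← pow_add, Fin.val_rev]; congr 1; omega
  rw [div_mul_eq_mul_div, div_eq_iff (pow_ne_zero _ hN0), mul_assoc, h2]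

lemma union_Ico_div {n : ℕ} {c : ℝ} (hc : 0 < c) :
    ⋃ m : Fin n, Set.Ico ((m : ℝ) / c) (((m : ℝ) + 1) / c) = Set.Ico 0 ((n : ℝ) / c) := by
  ext x
  simp only [Set.mem_iUnion, Set.mem_Ico]
  constructor
  · rintro ⟨m, h1, h2⟩
    refine ⟨le_trans (by positivity) h1, h2.trans_le ?_⟩
    have hm : (m : ℝ) + 1 ≤ n := by exact_mod_cast m.is_lt
    gcongr
  · rintro ⟨h0, h1⟩
    have hxc : 0 ≤ x * c := mul_nonneg h0 hc.le
    have hlt : x * c < n := (lt_div_iff₀ hc).mp h1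
    refine ⟨⟨⌊x * c⌋₊, (Nat.floor_lt hxc).mpr hlt⟩, ?_, ?_⟩
    · rw [div_le_iff₀ hc]; exact Nat.floor_le hxc
    · rw [lt_div_iff₀ hc]
      exact_mod_cast Nat.lt_floor_add_one (x * c)

lemma disj_Ico_div {n : ℕ} {c : ℝ} (hc : 0 < c) :
    Pairwise (Function.onFun Disjoint
      (fun m : Fin n => Set.Ico ((m : ℝ) / c) (((m : ℝ) + 1) / c))) := by
  have key : ∀ a b : Fin n, (a : ℕ) < (b : ℕ) →
      Disjoint (Set.Ico ((a : ℝ) / c) (((a : ℝ) + 1) / c))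
        (Set.Ico ((b : ℝ) / c) (((b : ℝ) + 1) / c)) := by
    intro a b h
    refine Set.disjoint_left.mpr fun x hx hx' => ?_
    have h1 : ((a : ℝ) + 1) ≤ (b : ℝ) := by exact_mod_cast h
    have h2 : ((a : ℝ) + 1) / c ≤ (b : ℝ) / c := by gcongr
    have := hx.2
    have := hx'.1
    linarith
  intro m m' hne
  rcases lt_or_gt_of_ne (fun h : (m : ℕ) = (m' : ℕ) => hne (Fin.ext h)) with h | h
  · exact key _ _ h
  · exact (key _ _ h).symm

lemma xk_mem_Ico {N k : ℕ} (hN : 0 < N) (α : Fin k → Fin N) :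
    xk N α ∈ Set.Ico (0:ℝ) 1 := by
  have hc : (0:ℝ) < (N : ℝ) ^ k := by positivity
  have h := xk_mul_pow hN α
  set m : ℕ := (finFunctionFinEquiv (fun i => α (Fin.rev i)) : ℕ) with hm
  have hxk : xk N α = (m : ℝ) / (N : ℝ) ^ k := by
    rw [eq_div_iff hc.ne']; exact h
  have hmlt : m < N ^ k := (finFunctionFinEquiv (fun i => α (Fin.rev i))).is_lt
  constructor
  · rw [hxk]; positivity
  · rw [hxk, div_lt_one hc]
    exact_mod_cast hmlt

lemma integral_muk {N : ℕ} (hN : 0 < N) (S : Fin N → H →L[ℂ] H) (f : H) (k : ℕ)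
    (ψ : ℝ → ℂ) :
    ∫ x in Set.Ico (0:ℝ) 1, ψ x ∂(muk S f k)
      = ∑ α : Fin k → Fin N, (‖adjoint (Sw S α) f‖ ^ 2 : ℝ) • ψ (xk N α) := by
  have hdint : ∀ α : Fin k → Fin N, Integrable ψ (Measure.dirac (xk N α)) := by
    intro α
    have h1 : ψ =ᵐ[Measure.dirac (xk N α)] fun _ => ψ (xk N α) := by
      rw [MeasureTheory.ae_dirac_eq]
      exact Filter.eventually_pure.mpr rfl
    exact (integrable_const _).congr h1.symm
  have hres : (muk S f k).restrict (Set.Ico (0:ℝ) 1) = muk S f k := by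
    apply Measure.restrict_eq_self_of_ae_mem
    rw [Filter.eventually_iff, mem_ae_iff]
    have hcompl : ∀ α : Fin k → Fin N,
        Measure.dirac (xk N α) {x : ℝ | x ∈ Set.Ico (0:ℝ) 1}ᶜ = 0 := by
      intro α
      obtain ⟨h1, h2⟩ := Set.mem_Ico.mp (xk_mem_Ico hN α)
      rw [Measure.dirac_apply]
      simp [Set.indicator_apply, h1, h2]
    simp only [muk, Measure.coe_finset_sum, Finset.sum_apply, Measure.smul_apply, hcompl,
      smul_zero, Finset.sum_const_zero]
  rw [hres, muk, integral_finset_sum_measure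
    (fun α _ => (hdint α).smul_measure ENNReal.ofReal_ne_top)]
  refine Finset.sum_congr rfl fun α _ => ?_
  rw [integral_smul_measure, integral_dirac, ENNReal.toReal_ofReal (by positivity)]

/-- The atomic measures `μ_f^{(k)}` converge weakly to the spectral measure `μ_f`:
for every continuous `ψ : [0,1] → ℂ`, `∫ψ dμ_f^{(k)} → ∫ψ dμ_f`. -/
theorem stmt_8 {N : ℕ} (hN : 2 ≤ N) (S : Fin N → H →L[ℂ] H) (hS : CuntzRep S)
    (f : H) (hf : ‖f‖ = 1)
    (μ : Measure ℝ) (hμ : IsSpectralMeasureR S f μ) :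
    ∀ ψ : ℝ → ℂ, ContinuousOn ψ (Set.Icc (0:ℝ) 1) →
      Filter.Tendsto (fun k : ℕ => ∫ x in Set.Ico (0:ℝ) 1, ψ x ∂(muk S f k))
        Filter.atTop (nhds (∫ x in Set.Ico (0:ℝ) 1, ψ x ∂μ)) := by
  intro ψ hψ
  have hN0 : 0 < N := by omega
  have hN1 : (1:ℝ) < (N:ℝ) := by exact_mod_cast (by omega : 1 < N)
  haveI : IsFiniteMeasure μ := ⟨by rw [hμ.2.1]; exact ENNReal.ofReal_lt_top⟩
  have hint : IntegrableOn ψ (Set.Icc (0:ℝ) 1) μ := hψ.integrableOn_compact isCompact_Icc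
  have huc := isCompact_Icc.uniformContinuousOn_of_continuous hψ
  rw [Metric.uniformContinuousOn_iff] at huc
  rw [Metric.tendsto_atTop]
  intro ε hε
  obtain ⟨δ, hδ, hδε⟩ := huc (ε/2) (half_pos hε)
  have htend : Filter.Tendsto (fun k : ℕ => ((N:ℝ)^k)⁻¹) Filter.atTop (nhds 0) := by
    simp_rw [← inv_pow]
    exact tendsto_pow_atTop_nhds_zero_of_lt_one (by positivity) (inv_lt_one_of_one_lt₀ hN1)
  obtain ⟨K0, hK0⟩ := Metric.tendsto_atTop.mp htend δ hδ
  refine ⟨max K0 1, fun k hk => ?_⟩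
  have hk1 : 1 ≤ k := le_trans (le_max_right _ _) hk
  have hkK : ((N:ℝ)^k)⁻¹ < δ := by
    have := hK0 k (le_trans (le_max_left _ _) hk)
    rwa [Real.dist_eq, sub_zero, abs_of_pos (by positivity)] at this
  have hc : (0:ℝ) < (N:ℝ)^k := by positivity
  set E : (Fin k → Fin N) ≃ Fin (N^k) :=
    (Equiv.arrowCongr Fin.revPerm (Equiv.refl (Fin N))).trans finFunctionFinEquiv with hE
  have hEapp : ∀ α : Fin k → Fin N, E α = finFunctionFinEquiv (fun i => α (Fin.rev i)) := by
    intro α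
    rfl
  have hxE : ∀ α : Fin k → Fin N, xk N α = ((E α : ℕ) : ℝ) / ((N:ℝ)^k) := by
    intro α
    rw [eq_div_iff hc.ne', hEapp α]
    exact xk_mul_pow hN0 α
  set J : Fin (N^k) → Set ℝ := fun m => Set.Ico ((m:ℝ)/((N:ℝ)^k)) (((m:ℝ)+1)/((N:ℝ)^k)) with hJ
  have hIkJ : ∀ α : Fin k → Fin N, Ik N α = J (E α) := by
    intro α
    rw [Ik, hxE α, hJ]
    dsimp only
    rw [add_div]
    congr 1
    rw [one_div]
  have hJu : ⋃ m, J m = Set.Ico (0:ℝ) 1 := by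
    rw [hJ]
    have h1 := union_Ico_div (n := N^k) (c := (N:ℝ)^k) hc
    have h2 : ((N^k : ℕ) : ℝ) / ((N:ℝ)^k) = 1 := by
      rw [Nat.cast_pow, div_self hc.ne']
    rw [h1, h2]
  have hJd := disj_Ico_div (n := N^k) (c := (N:ℝ)^k) hc
  have hBsum : ∫ x in Set.Ico (0:ℝ) 1, ψ x ∂μ = ∑ m : Fin (N^k), ∫ x in J m, ψ x ∂μ := by
    rw [← hJu, integral_iUnion (fun m => measurableSet_Ico) hJd
      (by rw [hJu]; exact hint.mono_set Set.Ico_subset_Icc_self), tsum_fintype]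
  have hBsum' : ∫ x in Set.Ico (0:ℝ) 1, ψ x ∂μ
      = ∑ α : Fin k → Fin N, ∫ x in Ik N α, ψ x ∂μ := by
    rw [hBsum, ← Equiv.sum_comp E (fun m => ∫ x in J m, ψ x ∂μ)]
    exact Finset.sum_congr rfl fun α _ => by rw [hIkJ α]
  have hIksub : ∀ α : Fin k → Fin N, Ik N α ⊆ Set.Ico (0:ℝ) 1 := by
    intro α
    rw [hIkJ α, ← hJu]
    exact Set.subset_iUnion J (E α)
  rw [integral_muk hN0, hBsum', dist_eq_norm, ← Finset.sum_sub_distrib]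
  have hterm : ∀ α : Fin k → Fin N,
      ‖(‖adjoint (Sw S α) f‖ ^ 2 : ℝ) • ψ (xk N α) - ∫ x in Ik N α, ψ x ∂μ‖
        ≤ (ε/2) * (μ (Ik N α)).toReal := by
    intro α
    have hw : (‖adjoint (Sw S α) f‖ ^ 2 : ℝ) = (μ (Ik N α)).toReal := by
      rw [hμ.2.2 k hk1 α, ENNReal.toReal_ofReal (by positivity)]
    have hci : ∫ _ in Ik N α, (ψ (xk N α)) ∂μ = (μ (Ik N α)).toReal • ψ (xk N α) :=
      setIntegral_const _
    have hIint : IntegrableOn ψ (Ik N α) μ :=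
      hint.mono_set ((hIksub α).trans Set.Ico_subset_Icc_self)
    have hcint : IntegrableOn (fun _ => ψ (xk N α)) (Ik N α) μ :=
      integrableOn_const (measure_ne_top μ _)
    rw [hw, ← hci, ← integral_sub hcint hIint]
    refine norm_setIntegral_le_of_norm_le_const_ae' (measure_lt_top μ _)
      (Filter.Eventually.of_forall fun x hx => ?_)
    have hxmem : x ∈ Set.Icc (0:ℝ) 1 := Set.Ico_subset_Icc_self (hIksub α hx)
    have hxk_in : xk N α ∈ Ik N α :=
      ⟨le_refl _, lt_add_of_pos_right _ (by positivity)⟩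
    have hxkmem : xk N α ∈ Set.Icc (0:ℝ) 1 := Set.Ico_subset_Icc_self (hIksub α hxk_in)
    have hdist : dist (xk N α) x < δ := by
      have h1 := hx.1
      have h2 := hx.2
      rw [Real.dist_eq, abs_of_nonpos (by linarith), neg_sub]
      linarith
    have hlt := hδε _ hxkmem _ hxmem hdist
    rw [dist_eq_norm] at hlt
    exact le_of_lt hlt
  have hsum1 : ∑ α : Fin k → Fin N, (μ (Ik N α)).toReal
      = (μ (Set.Ico (0:ℝ) 1)).toReal := by
    rw [← ENNReal.toReal_sum (fun α _ => measure_ne_top μ _)]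
    congr 1
    have hunion : ⋃ α : Fin k → Fin N, Ik N α = Set.Ico (0:ℝ) 1 := by
      rw [← hJu]
      calc ⋃ α : Fin k → Fin N, Ik N α = ⋃ α, J (E α) := by simp_rw [hIkJ]
        _ = ⋃ m, J m := E.surjective.iUnion_comp J
    have hdisj : Pairwise (Function.onFun Disjoint fun α : Fin k → Fin N => Ik N α) := by
      intro α β hne
      have := hJd (E.injective.ne hne)
      rwa [Function.onFun, hIkJ α, hIkJ β]
    rw [← hunion, measure_iUnion hdisj (fun α => measurableSet_Ico), tsum_fintype]
  calc ‖∑ α : Fin k → Fin N,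
        ((‖adjoint (Sw S α) f‖ ^ 2 : ℝ) • ψ (xk N α) - ∫ x in Ik N α, ψ x ∂μ)‖
      ≤ ∑ α : Fin k → Fin N,
        ‖(‖adjoint (Sw S α) f‖ ^ 2 : ℝ) • ψ (xk N α) - ∫ x in Ik N α, ψ x ∂μ‖ :=
        norm_sum_le _ _
    _ ≤ ∑ α : Fin k → Fin N, (ε/2) * (μ (Ik N α)).toReal :=
        Finset.sum_le_sum fun α _ => hterm α
    _ = (ε/2) * (μ (Set.Ico (0:ℝ) 1)).toReal := by rw [← Finset.mul_sum, hsum1]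
    _ ≤ (ε/2) * 1 := by
        have h1 : μ (Set.Ico (0:ℝ) 1) ≤ μ Set.univ := measure_mono (Set.subset_univ _)
        have h2 : (μ (Set.Ico (0:ℝ) 1)).toReal ≤ 1 := by
          have := ENNReal.toReal_mono (by rw [hμ.2.1]; exact ENNReal.ofReal_ne_top) h1
          rwa [hμ.2.1, hf, one_pow, ENNReal.toReal_ofReal one_pos.le] at this
        nlinarith [le_of_lt hε]
    _ < ε := by linarith
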